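/- In the asymmetric-information two-ISP linear demand game (ISP_1 observes θ, ISP_2 does not), the unique equilibrium is p_1(θ) = D(θ)/(2α) + β E[D(θ)]/(2α(2α - β)) and p_2 = E[D(θ)]/(2α - β), with equilibrium expected utilities E[U_1] = E[D(θ)²]/(4α) + β(4α - β) E[D(θ)]²/(4α(2α - β)²) and E[U_2] = α E[D(θ)]²/(2α - β)². -/

import Mathlib

private lemma quad_max {α a x : ℝ} (hα : 0 < α) (ha : 0 ≤ a)
    (h : ∀ q : ℝ, 0 ≤ q → (a - α*q)*q ≤ (a - α*x)*x) : x = a/(2*α) := by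
  have h1 := h (a/(2*α)) (by positivity)
  have e : (a - α*(a/(2*α)))*(a/(2*α)) = a^2/(4*α) := by field_simp; ring
  rw [e, div_le_iff₀ (by positivity : (0:ℝ) < 4*α)] at h1
  have h2 : a - 2*α*x = 0 := by nlinarith [sq_nonneg (a - 2*α*x)]
  field_simp
  linarith

theorem stmt3 {Θ : Type*} [Fintype Θ] (P D : Θ → ℝ)
    (hP : ∀ θ, 0 ≤ P θ) (hPsum : ∑ θ, P θ = 1) (hD : ∀ θ, 0 ≤ D θ)
    (α β : ℝ) (hβ : 0 < β) (hαβ : β < α)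
    (p₁ : Θ → ℝ) (p₂ : ℝ) (hp₁ : ∀ θ, 0 ≤ p₁ θ) (hp₂ : 0 ≤ p₂) :
    (((∀ θ, ∀ q, 0 ≤ q → (D θ - α * q + β * p₂) * q ≤
          (D θ - α * p₁ θ + β * p₂) * p₁ θ) ∧
      (∀ q, 0 ≤ q → ∑ θ, P θ * ((D θ - α * q + β * p₁ θ) * q) ≤
          ∑ θ, P θ * ((D θ - α * p₂ + β * p₁ θ) * p₂))) ↔
      ((∀ θ, p₁ θ = D θ / (2 * α) +
          β * (∑ θ', P θ' * D θ') / (2 * α * (2 * α - β))) ∧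
        p₂ = (∑ θ', P θ' * D θ') / (2 * α - β))) ∧
    (((∀ θ, p₁ θ = D θ / (2 * α) +
          β * (∑ θ', P θ' * D θ') / (2 * α * (2 * α - β))) ∧
        p₂ = (∑ θ', P θ' * D θ') / (2 * α - β)) →
      (∑ θ, P θ * ((D θ - α * p₁ θ + β * p₂) * p₁ θ) =
          (∑ θ, P θ * D θ ^ 2) / (4 * α) +
            β * (4 * α - β) * (∑ θ, P θ * D θ) ^ 2 /
              (4 * α * (2 * α - β) ^ 2)) ∧
      (∑ θ, P θ * ((D θ - α * p₂ + β * p₁ θ) * p₂) =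
          α * (∑ θ, P θ * D θ) ^ 2 / (2 * α - β) ^ 2)) := by
  have hα : 0 < α := hβ.trans hαβ
  have h2ab : 0 < 2*α - β := by linarith
  set E : ℝ := ∑ θ, P θ * D θ with hE
  have hEnn : 0 ≤ E := Finset.sum_nonneg fun θ _ => mul_nonneg (hP θ) (hD θ)
  set M : ℝ := ∑ θ, P θ * p₁ θ with hM
  have hMnn : 0 ≤ M := Finset.sum_nonneg fun θ _ => mul_nonneg (hP θ) (hp₁ θ)
  clear_value E M
  -- sum rewrite for ISP₂'s expected payoff
  have hkey : ∀ q : ℝ, ∑ θ, P θ * ((D θ - α * q + β * p₁ θ) * q)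
      = (E + β * M - α * q) * q := by
    intro q
    rw [Finset.sum_congr rfl (fun θ _ => show P θ * ((D θ - α * q + β * p₁ θ) * q)
      = (P θ * D θ) * q + (P θ * p₁ θ) * (β * q) - P θ * (α * q * q) from by ring)]
    rw [Finset.sum_sub_distrib, Finset.sum_add_distrib, ← Finset.sum_mul,
      ← Finset.sum_mul, ← Finset.sum_mul, hPsum, ← hE, ← hM]
    ring
  constructor
  · constructor
    · rintro ⟨h1, h2⟩
      -- p₁ θ = (D θ + β p₂)/(2α)
      have hp1 : ∀ θ, p₁ θ = (D θ + β * p₂) / (2*α) := by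
        intro θ
        refine quad_max hα (add_nonneg (hD θ) (mul_nonneg hβ.le hp₂)) (fun q hq => ?_)
        have e : ∀ r : ℝ, (D θ + β * p₂ - α * r) * r = (D θ - α * r + β * p₂) * r :=
          fun r => by ring
        rw [e q, e (p₁ θ)]
        exact h1 θ q hq
      -- p₂ = (E + β M)/(2α)
      have hp2 : p₂ = (E + β * M) / (2*α) := by
        refine quad_max hα (add_nonneg hEnn (mul_nonneg hβ.le hMnn)) (fun q hq => ?_)
        have := h2 q hq
        rw [hkey q, hkey p₂] at this
        exact this
      -- M in terms of p₂
      have hMeq : M = (E + β * p₂) / (2*α) := by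
        rw [hM, Finset.sum_congr rfl (fun θ _ => show P θ * p₁ θ
          = (P θ * D θ) * (1/(2*α)) + P θ * (β * p₂ / (2*α)) from by
            rw [hp1 θ]; field_simp)]
        rw [Finset.sum_add_distrib, ← Finset.sum_mul, ← Finset.sum_mul, hPsum, ← hE]
        field_simp
        try ring
      have hp2v : p₂ = E / (2*α - β) := by
        rw [hMeq] at hp2
        have h2ab' : (2*α + β) ≠ 0 := by positivity
        rw [eq_div_iff (ne_of_gt h2ab)]
        have : p₂ * (2*α - β) * (2*α + β) = E * (2*α + β) := by
          field_simp at hp2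
          nlinarith [hp2]
        exact mul_right_cancel₀ h2ab' this
      refine ⟨fun θ => ?_, hp2v⟩
      rw [hp1 θ, hp2v]
      field_simp
    · rintro ⟨h1, h2⟩
      have hMeq : M = p₂ := by
        rw [hM, h2, Finset.sum_congr rfl (fun θ _ => show P θ * p₁ θ
          = (P θ * D θ) * (1/(2*α)) + P θ * (β * E / (2*α*(2*α-β))) from by
            rw [h1 θ]; field_simp)]
        rw [Finset.sum_add_distrib, ← Finset.sum_mul, ← Finset.sum_mul, hPsum, ← hE]
        field_simp
        ring
      constructor
      · intro θ q hq
        have e1 : 2*α*p₁ θ = D θ + β * p₂ := by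
          rw [h1 θ, h2]; field_simp
        have key : (D θ - α * p₁ θ + β * p₂) * p₁ θ - (D θ - α * q + β * p₂) * q
            = α * (p₁ θ - q)^2 := by linear_combination (q - p₁ θ) * e1
        nlinarith [mul_nonneg hα.le (sq_nonneg (p₁ θ - q))]
      · intro q hq
        rw [hkey q, hkey p₂, hMeq]
        have e2 : 2*α*p₂ = E + β * p₂ := by
          rw [h2]; field_simp; ring
        have key : (E + β * p₂ - α * p₂) * p₂ - (E + β * p₂ - α * q) * q
            = α * (p₂ - q)^2 := by linear_combination (q - p₂) * e2
        nlinarith [mul_nonneg hα.le (sq_nonneg (p₂ - q))]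
  · rintro ⟨h1, h2⟩
    have hMeq : M = p₂ := by
      rw [hM, h2, Finset.sum_congr rfl (fun θ _ => show P θ * p₁ θ
        = (P θ * D θ) * (1/(2*α)) + P θ * (β * E / (2*α*(2*α-β))) from by
          rw [h1 θ]; field_simp)]
      rw [Finset.sum_add_distrib, ← Finset.sum_mul, ← Finset.sum_mul, hPsum, ← hE]
      field_simp
      ring
    constructor
    · set c : ℝ := β * E / (2*α*(2*α-β)) with hc
      have h2c : β * p₂ = 2*α*c := by
        rw [hc, h2]; field_simp
      have hterm : ∀ θ, P θ * ((D θ - α * p₁ θ + β * p₂) * p₁ θ)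
        = (P θ * D θ ^ 2) * (1/(4*α)) + (P θ * D θ) * c + P θ * (α * c^2) := by
        intro θ
        rw [h1 θ, h2c]
        field_simp
        ring
      rw [Finset.sum_congr rfl (fun θ _ => hterm θ), Finset.sum_add_distrib,
        Finset.sum_add_distrib, ← Finset.sum_mul, ← Finset.sum_mul,
        ← Finset.sum_mul, hPsum, ← hE, hc]
      field_simp
      field_simp [(by linarith : (0:ℝ) < α*2-β).ne']
      ring
    · have e2 : (2*α - β) * p₂ = E := by
        rw [h2]; field_simp
      rw [hkey p₂, hMeq, eq_div_iff (pow_ne_zero 2 (ne_of_gt h2ab))]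
      linear_combination (α*E - (β-α)*p₂*(2*α-β) - 2*(2*α-β)*(α-β)*p₂) * e2
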